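/- Let a < b be real, U ⊆ ℂ open with [a,b] ⊂ U, F holomorphic on U with 1 + F(λ) ∉ (−∞,0] on U, ν(λ) = −(1/(2πi))·Log(1+F(λ)), and α(λ) = exp(∫_a^b ν(μ)/(μ−λ) dμ) for λ ∉ [a,b]. Then for every λ₀ ∈ (a,b) the one-sided limits α₊(λ₀) = lim_{ε→0⁺} α(λ₀ + iε) and α₋(λ₀) = lim_{ε→0⁺} α(λ₀ − iε) exist, are nonzero, and satisfy the multiplicative jump relation α₊(λ₀)·(1 + F(λ₀)) = α₋(λ₀). -/

import Mathlib

open Complex Set MeasureTheory intervalIntegral Filter Topology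

private lemma ofReal_sub_ne_zero {lam : ℂ} (h : lam.im ≠ 0) (x : ℝ) :
    (x : ℂ) - lam ≠ 0 := by
  intro hc
  apply h
  have : lam = (x : ℂ) := by linear_combination -hc
  rw [this]; simp

/-- FTC computation of `∫ 1/(μ - λ)` for `λ` off the real axis. -/
private lemma log_integral (a b : ℝ) (lam : ℂ) (h : lam.im ≠ 0) :
    ∫ x in a..b, ((x : ℂ) - lam)⁻¹
      = Complex.log ((b : ℂ) - lam) - Complex.log ((a : ℂ) - lam) := by
  apply intervalIntegral.integral_eq_sub_of_hasDerivAt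
  · intro x _
    have hmem : ((x : ℂ) - lam) ∈ Complex.slitPlane := by
      refine Or.inr ?_
      simpa using h
    have h1 : HasDerivAt (fun z : ℂ => Complex.log (z - lam)) ((x : ℂ) - lam)⁻¹ (x : ℂ) := by
      have := (Complex.hasDerivAt_log hmem).comp (x : ℂ)
        ((hasDerivAt_id ((x : ℂ))).sub_const lam)
      simpa [Function.comp_def] using this
    exact h1.comp_ofReal
  · apply ContinuousOn.intervalIntegrable
    exact (ContinuousOn.inv₀ ((continuous_ofReal.sub continuous_const).continuousOn)
      (fun x _ => ofReal_sub_ne_zero h x))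

/-- Decomposition of the Cauchy integral. -/
private lemma decomp (a b : ℝ) (ν : ℂ → ℂ) (hcont : ContinuousOn (fun x : ℝ => ν x) (Set.uIcc a b))
    (c lam : ℂ) (h : lam.im ≠ 0) :
    ∫ μ in a..b, ν μ / ((μ : ℂ) - lam)
      = (∫ μ in a..b, (ν μ - c) / ((μ : ℂ) - lam))
        + c * (Complex.log ((b : ℂ) - lam) - Complex.log ((a : ℂ) - lam)) := by
  have hden : Continuous fun x : ℝ => (x : ℂ) - lam := continuous_ofReal.sub continuous_const
  have hne : ∀ x : ℝ, (x : ℂ) - lam ≠ 0 := ofReal_sub_ne_zero h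
  have h1 : IntervalIntegrable (fun μ : ℝ => (ν μ - c) / ((μ : ℂ) - lam)) volume a b := by
    apply ContinuousOn.intervalIntegrable
    exact (hcont.sub continuousOn_const).div hden.continuousOn (fun x _ => hne x)
  have h2 : IntervalIntegrable (fun μ : ℝ => c * ((μ : ℂ) - lam)⁻¹) volume a b := by
    apply ContinuousOn.intervalIntegrable
    exact continuousOn_const.mul (hden.continuousOn.inv₀ (fun x _ => hne x))
  have key : ∀ x : ℝ, ν x / ((x : ℂ) - lam)
      = (ν x - c) / ((x : ℂ) - lam) + c * ((x : ℂ) - lam)⁻¹ := by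
    intro x
    field_simp
    ring
  calc ∫ μ in a..b, ν μ / ((μ : ℂ) - lam)
      = ∫ μ in a..b, ((ν μ - c) / ((μ : ℂ) - lam) + c * ((μ : ℂ) - lam)⁻¹) := by
        exact intervalIntegral.integral_congr (fun x _ => key x)
    _ = (∫ μ in a..b, (ν μ - c) / ((μ : ℂ) - lam)) + ∫ μ in a..b, c * ((μ : ℂ) - lam)⁻¹ :=
        intervalIntegral.integral_add h1 h2
    _ = (∫ μ in a..b, (ν μ - c) / ((μ : ℂ) - lam))
        + c * (Complex.log ((b : ℂ) - lam) - Complex.log ((a : ℂ) - lam)) := by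
        rw [intervalIntegral.integral_const_mul, log_integral a b lam h]

/-- Dominated convergence for the regular part of the Cauchy integral. -/
private lemma dct (a b lam₀ : ℝ) (L : ℝ) (hL : 0 ≤ L) (g : ℝ → ℂ)
    (hg : ContinuousOn g (Set.uIcc a b))
    (hlip : ∀ x ∈ Set.uIcc a b, ‖g x‖ ≤ L * |x - lam₀|)
    (z : ℝ → ℂ)
    (hz : Tendsto z (𝓝[>] (0 : ℝ)) (𝓝 (lam₀ : ℂ)))
    (hge : ∀ ε ∈ Set.Ioi (0 : ℝ), ∀ x : ℝ, |x - lam₀| ≤ ‖(x : ℂ) - z ε‖)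
    (him : ∀ ε ∈ Set.Ioi (0 : ℝ), (z ε).im ≠ 0) :
    Tendsto (fun ε => ∫ x in a..b, g x / ((x : ℂ) - z ε)) (𝓝[>] (0 : ℝ))
      (𝓝 (∫ x in a..b, g x / ((x : ℂ) - (lam₀ : ℂ)))) := by
  apply intervalIntegral.tendsto_integral_filter_of_dominated_convergence (fun _ => L)
  · filter_upwards [self_mem_nhdsWithin] with ε hε
    apply ContinuousOn.aestronglyMeasurable ?_ measurableSet_uIoc
    apply ContinuousOn.mono ?_ Set.uIoc_subset_uIcc
    exact hg.div (continuous_ofReal.sub continuous_const).continuousOn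
      (fun x _ => ofReal_sub_ne_zero (him ε hε) x)
  · filter_upwards [self_mem_nhdsWithin] with ε hε
    filter_upwards with x hx
    have hx' : x ∈ Set.uIcc a b := Set.uIoc_subset_uIcc hx
    have hd : (x : ℂ) - z ε ≠ 0 := ofReal_sub_ne_zero (him ε hε) x
    have habs : (0 : ℝ) < ‖(x : ℂ) - z ε‖ := norm_pos_iff.2 hd
    rw [norm_div]
    rw [div_le_iff₀ habs]
    calc ‖g x‖ ≤ L * |x - lam₀| := hlip x hx'
      _ ≤ L * ‖(x : ℂ) - z ε‖ := by
          exact mul_le_mul_of_nonneg_left (hge ε hε x) hL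
      _ = L * ‖(x : ℂ) - z ε‖ := by rfl
  · exact intervalIntegrable_const
  · have hne : ∀ᵐ x : ℝ, x ≠ lam₀ := by
      rw [MeasureTheory.ae_iff]
      have : {x : ℝ | ¬x ≠ lam₀} = {lam₀} := by ext x; simp
      rw [this]
      exact measure_singleton lam₀
    filter_upwards [hne] with x hx _
    have hd : (x : ℂ) - (lam₀ : ℂ) ≠ 0 := by
      simpa [sub_eq_zero, Complex.ofReal_inj] using hx
    exact Tendsto.div tendsto_const_nhds (tendsto_const_nhds.sub hz) hd

set_option maxHeartbeats 1000000 in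
/-- the boundary values `α₊, α₋` of `α(λ) = exp(∫_a^b ν(μ)/(μ-λ) dμ)`
on `(a,b)` exist, are nonzero, and satisfy the multiplicative jump relation
`α₊(λ₀)(1 + F(λ₀)) = α₋(λ₀)`. -/
theorem stmt9 (a b : ℝ) (hab : a < b) (U : Set ℂ) (hU : IsOpen U)
    (hUab : (fun x : ℝ => (x : ℂ)) '' Set.Icc a b ⊆ U)
    (F : ℂ → ℂ) (hF : DifferentiableOn ℂ F U)
    (hF1 : ∀ lam ∈ U, ∀ r : ℝ, r ≤ 0 → 1 + F lam ≠ (r : ℂ))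
    (ν : ℂ → ℂ) (hν : ∀ z, ν z = -(1 / (2 * Real.pi * Complex.I)) * Complex.log (1 + F z))
    (α : ℂ → ℂ) (hα : ∀ lam : ℂ, α lam = Complex.exp (∫ μ in a..b, ν μ / (μ - lam)))
    (lam₀ : ℝ) (hlam₀ : lam₀ ∈ Set.Ioo a b) :
    ∃ αp αm : ℂ,
      Filter.Tendsto (fun ε : ℝ => α ((lam₀ : ℂ) + ε * Complex.I)) (𝓝[>] 0) (𝓝 αp) ∧
      Filter.Tendsto (fun ε : ℝ => α ((lam₀ : ℂ) - ε * Complex.I)) (𝓝[>] 0) (𝓝 αm) ∧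
      αp ≠ 0 ∧ αm ≠ 0 ∧ αp * (1 + F (lam₀ : ℂ)) = αm := by
  obtain ⟨ha0, hb0⟩ := hlam₀
  have hlmem : lam₀ ∈ Set.Icc a b := ⟨ha0.le, hb0.le⟩
  have hsub : ∀ x ∈ Set.Icc a b, ((x : ℝ) : ℂ) ∈ U := fun x hx => hUab ⟨x, hx, rfl⟩
  have hslit : ∀ z ∈ U, 1 + F z ∈ Complex.slitPlane := by
    intro z hz
    by_contra hcon
    rw [Complex.mem_slitPlane_iff] at hcon
    push_neg at hcon
    exact hF1 z hz (1 + F z).re hcon.1 (Complex.ext (by simp) (by simp [hcon.2]))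
  have hνd : DifferentiableOn ℂ ν U := by
    rw [show ν = _ from funext hν]
    exact ((hF.const_add 1).clog hslit).const_mul _
  have hνcont : ContinuousOn (fun x : ℝ => ν x) (Set.Icc a b) :=
    hνd.continuousOn.comp continuous_ofReal.continuousOn (fun x hx => hsub x hx)
  have han : AnalyticOnNhd ℂ ν U := hνd.analyticOnNhd hU
  have hScomp : IsCompact ((fun x : ℝ => (x : ℂ)) '' Set.Icc a b) :=
    isCompact_Icc.image continuous_ofReal
  obtain ⟨C, hC⟩ := hScomp.exists_bound_of_continuousOn (han.deriv.continuousOn.mono hUab)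
  set L := max C 0 with hLdef
  have hL : (0 : ℝ) ≤ L := le_max_right _ _
  have hbound : ∀ x ∈ Set.Icc a b, ‖deriv ν (x : ℂ)‖ ≤ L := fun x hx =>
    le_trans (hC _ ⟨x, hx, rfl⟩) (le_max_left _ _)
  have hd : ∀ x ∈ Set.Icc a b,
      HasDerivWithinAt (fun t : ℝ => ν t) (deriv ν (x : ℂ)) (Set.Icc a b) x := by
    intro x hx
    have hda : DifferentiableAt ℂ ν (x : ℂ) := hνd.differentiableAt (hU.mem_nhds (hsub x hx))
    exact hda.hasDerivAt.comp_ofReal.hasDerivWithinAt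
  have hlip : ∀ x ∈ Set.Icc a b, ‖ν x - ν lam₀‖ ≤ L * |x - lam₀| := by
    intro x hx
    have := (convex_Icc a b).norm_image_sub_le_of_norm_hasDerivWithin_le
      (f' := fun t : ℝ => deriv ν (t : ℂ)) hd (fun t ht => hbound t ht) hlmem hx
    simpa [Real.norm_eq_abs] using this
  set ν₀ := ν (lam₀ : ℂ) with hν₀def
  have huIcc : Set.uIcc a b = Set.Icc a b := Set.uIcc_of_le hab.le
  have hνcontu : ContinuousOn (fun x : ℝ => ν x) (Set.uIcc a b) := by
    rw [huIcc]; exact hνcont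
  have hgcont : ContinuousOn (fun x : ℝ => ν x - ν₀) (Set.uIcc a b) :=
    hνcontu.sub continuousOn_const
  have hglip : ∀ x ∈ Set.uIcc a b, ‖ν x - ν₀‖ ≤ L * |x - lam₀| := by
    rw [huIcc]; exact hlip
  -- geometric facts
  have hre : ∀ (w : ℂ) (x : ℝ), w.re = (lam₀ : ℝ) → |x - lam₀| ≤ ‖(x : ℂ) - w‖ := by
    intro w x hw
    have h1 : ((x : ℂ) - w).re = x - lam₀ := by simp [hw]
    calc |x - lam₀| = |((x : ℂ) - w).re| := by rw [h1]
      _ ≤ ‖(x : ℂ) - w‖ := Complex.abs_re_le_norm _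
  have hbpos : (0 : ℝ) < b - lam₀ := by linarith
  -- limits of the regular part
  have Tp1 : Tendsto (fun ε : ℝ => ∫ x in a..b, (ν x - ν₀) / ((x : ℂ) - ((lam₀ : ℂ) + ε * Complex.I)))
      (𝓝[>] 0) (𝓝 (∫ x in a..b, (ν x - ν₀) / ((x : ℂ) - (lam₀ : ℂ)))) := by
    apply dct a b lam₀ L hL _ hgcont hglip (fun ε : ℝ => (lam₀ : ℂ) + ε * Complex.I)
    · have hc : Tendsto (fun ε : ℝ => (lam₀ : ℂ) + ε * Complex.I) (𝓝 0)
          (𝓝 ((lam₀ : ℂ) + (0 : ℝ) * Complex.I)) :=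
        (continuous_const.add (Complex.continuous_ofReal.mul continuous_const)).tendsto 0
      simpa using hc.mono_left nhdsWithin_le_nhds
    · intro ε _ x
      exact hre _ x (by simp)
    · intro ε hε
      simpa using (ne_of_gt hε)
  have Tm1 : Tendsto (fun ε : ℝ => ∫ x in a..b, (ν x - ν₀) / ((x : ℂ) - ((lam₀ : ℂ) - ε * Complex.I)))
      (𝓝[>] 0) (𝓝 (∫ x in a..b, (ν x - ν₀) / ((x : ℂ) - (lam₀ : ℂ)))) := by
    apply dct a b lam₀ L hL _ hgcont hglip (fun ε : ℝ => (lam₀ : ℂ) - ε * Complex.I)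
    · have hc : Tendsto (fun ε : ℝ => (lam₀ : ℂ) - ε * Complex.I) (𝓝 0)
          (𝓝 ((lam₀ : ℂ) - (0 : ℝ) * Complex.I)) :=
        (continuous_const.sub (Complex.continuous_ofReal.mul continuous_const)).tendsto 0
      simpa using hc.mono_left nhdsWithin_le_nhds
    · intro ε _ x
      exact hre _ x (by simp)
    · intro ε hε
      simp only [Complex.sub_im, Complex.ofReal_im, Complex.mul_im, Complex.ofReal_re,
        Complex.I_im, Complex.I_re, mul_zero, mul_one, zero_sub, zero_add, zero_mul, add_zero]
      intro hc
      simp only [Set.mem_Ioi] at hε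
      linarith
  -- limits of log (b - λ)
  have hbslit : ((b : ℂ) - (lam₀ : ℂ)) ∈ Complex.slitPlane := by
    refine Or.inl ?_
    simpa using hbpos
  have Tpb : Tendsto (fun ε : ℝ => Complex.log ((b : ℂ) - ((lam₀ : ℂ) + ε * Complex.I)))
      (𝓝[>] 0) (𝓝 (Complex.log ((b : ℂ) - (lam₀ : ℂ)))) := by
    refine Filter.Tendsto.clog ?_ hbslit
    have hc : Tendsto (fun ε : ℝ => (b : ℂ) - ((lam₀ : ℂ) + (ε : ℂ) * Complex.I)) (𝓝 0)
      (𝓝 ((b : ℂ) - ((lam₀ : ℂ) + ((0 : ℝ) : ℂ) * Complex.I))) :=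
      Continuous.tendsto (by fun_prop) 0
    simpa using hc.mono_left nhdsWithin_le_nhds
  have Tmb : Tendsto (fun ε : ℝ => Complex.log ((b : ℂ) - ((lam₀ : ℂ) - ε * Complex.I)))
      (𝓝[>] 0) (𝓝 (Complex.log ((b : ℂ) - (lam₀ : ℂ)))) := by
    refine Filter.Tendsto.clog ?_ hbslit
    have hc : Tendsto (fun ε : ℝ => (b : ℂ) - ((lam₀ : ℂ) - (ε : ℂ) * Complex.I)) (𝓝 0)
      (𝓝 ((b : ℂ) - ((lam₀ : ℂ) - ((0 : ℝ) : ℂ) * Complex.I))) :=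
      Continuous.tendsto (by fun_prop) 0
    simpa using hc.mono_left nhdsWithin_le_nhds
  -- limits of log (a - λ)
  have hare : ((a : ℂ) - (lam₀ : ℂ)).re < 0 := by simpa using sub_neg.mpr ha0
  have haim : ((a : ℂ) - (lam₀ : ℂ)).im = 0 := by simp
  have Tpa : Tendsto (fun ε : ℝ => Complex.log ((a : ℂ) - ((lam₀ : ℂ) + ε * Complex.I)))
      (𝓝[>] 0)
      (𝓝 ((Real.log ‖(a : ℂ) - (lam₀ : ℂ)‖ : ℂ) - Real.pi * Complex.I)) := by
    apply (Complex.tendsto_log_nhdsWithin_im_neg_of_re_neg_of_im_zero hare haim).comp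
    rw [tendsto_nhdsWithin_iff]
    constructor
    · have hc : Tendsto (fun ε : ℝ => (a : ℂ) - ((lam₀ : ℂ) + (ε : ℂ) * Complex.I)) (𝓝 0)
        (𝓝 ((a : ℂ) - ((lam₀ : ℂ) + ((0 : ℝ) : ℂ) * Complex.I))) :=
        Continuous.tendsto (by fun_prop) 0
      simpa using hc.mono_left nhdsWithin_le_nhds
    · filter_upwards [self_mem_nhdsWithin] with ε hε
      show ((a : ℂ) - ((lam₀ : ℂ) + ε * Complex.I)).im < 0
      simp only [Complex.sub_im, Complex.ofReal_im, Complex.add_im, Complex.mul_im,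
        Complex.ofReal_re, Complex.I_im, Complex.I_re, mul_zero, mul_one, zero_add, zero_sub,
        zero_mul, add_zero]
      simpa using hε
  have Tma : Tendsto (fun ε : ℝ => Complex.log ((a : ℂ) - ((lam₀ : ℂ) - ε * Complex.I)))
      (𝓝[>] 0)
      (𝓝 ((Real.log ‖(a : ℂ) - (lam₀ : ℂ)‖ : ℂ) + Real.pi * Complex.I)) := by
    apply (Complex.tendsto_log_nhdsWithin_im_nonneg_of_re_neg_of_im_zero hare haim).comp
    rw [tendsto_nhdsWithin_iff]
    constructor
    · have hc : Tendsto (fun ε : ℝ => (a : ℂ) - ((lam₀ : ℂ) - (ε : ℂ) * Complex.I)) (𝓝 0)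
        (𝓝 ((a : ℂ) - ((lam₀ : ℂ) - ((0 : ℝ) : ℂ) * Complex.I))) :=
        Continuous.tendsto (by fun_prop) 0
      simpa using hc.mono_left nhdsWithin_le_nhds
    · filter_upwards [self_mem_nhdsWithin] with ε hε
      show (0 : ℝ) ≤ ((a : ℂ) - ((lam₀ : ℂ) - ε * Complex.I)).im
      simp only [Complex.sub_im, Complex.ofReal_im, Complex.mul_im, Complex.ofReal_re,
        Complex.I_im, Complex.I_re, mul_zero, mul_one, zero_sub, zero_mul, add_zero, zero_add]
      simp only [Set.mem_Ioi] at hε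
      linarith
  -- decomposition of α near the segment
  have hαplus : ∀ᶠ ε : ℝ in 𝓝[>] 0, α ((lam₀ : ℂ) + ε * Complex.I)
      = Complex.exp ((∫ x in a..b, (ν x - ν₀) / ((x : ℂ) - ((lam₀ : ℂ) + ε * Complex.I)))
          + ν₀ * (Complex.log ((b : ℂ) - ((lam₀ : ℂ) + ε * Complex.I))
              - Complex.log ((a : ℂ) - ((lam₀ : ℂ) + ε * Complex.I)))) := by
    filter_upwards [self_mem_nhdsWithin] with ε hε
    rw [hα]
    congr 1
    apply decomp a b ν hνcontu ν₀
    simpa using (ne_of_gt hε)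
  have hαminus : ∀ᶠ ε : ℝ in 𝓝[>] 0, α ((lam₀ : ℂ) - ε * Complex.I)
      = Complex.exp ((∫ x in a..b, (ν x - ν₀) / ((x : ℂ) - ((lam₀ : ℂ) - ε * Complex.I)))
          + ν₀ * (Complex.log ((b : ℂ) - ((lam₀ : ℂ) - ε * Complex.I))
              - Complex.log ((a : ℂ) - ((lam₀ : ℂ) - ε * Complex.I)))) := by
    filter_upwards [self_mem_nhdsWithin] with ε hε
    rw [hα]
    congr 1
    apply decomp a b ν hνcontu ν₀
    simp only [Complex.sub_im, Complex.ofReal_im, Complex.mul_im, Complex.ofReal_re,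
      Complex.I_im, Complex.I_re, mul_zero, mul_one, zero_sub, zero_mul, add_zero, zero_add]
    intro hc
    simp only [Set.mem_Ioi] at hε
    linarith
  refine ⟨Complex.exp ((∫ x in a..b, (ν x - ν₀) / ((x : ℂ) - (lam₀ : ℂ)))
      + ν₀ * (Complex.log ((b : ℂ) - (lam₀ : ℂ))
        - ((Real.log ‖(a : ℂ) - (lam₀ : ℂ)‖ : ℂ) - Real.pi * Complex.I))),
    Complex.exp ((∫ x in a..b, (ν x - ν₀) / ((x : ℂ) - (lam₀ : ℂ)))
      + ν₀ * (Complex.log ((b : ℂ) - (lam₀ : ℂ))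
        - ((Real.log ‖(a : ℂ) - (lam₀ : ℂ)‖ : ℂ) + Real.pi * Complex.I))),
    ?_, ?_, Complex.exp_ne_zero _, Complex.exp_ne_zero _, ?_⟩
  · have hcomb := Tp1.add ((tendsto_const_nhds (x := ν₀)).mul (Tpb.sub Tpa))
    have := (Complex.continuous_exp.tendsto _).comp hcomb
    exact this.congr' (by filter_upwards [hαplus] with ε h; exact h.symm)
  · have hcomb := Tm1.add ((tendsto_const_nhds (x := ν₀)).mul (Tmb.sub Tma))
    have := (Complex.continuous_exp.tendsto _).comp hcomb
    exact this.congr' (by filter_upwards [hαminus] with ε h; exact h.symm)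
  · have h0U : ((lam₀ : ℂ)) ∈ U := hsub lam₀ hlmem
    have h1F : 1 + F (lam₀ : ℂ) ≠ 0 := by
      have := hF1 _ h0U 0 le_rfl
      simpa using this
    rw [← Complex.exp_log h1F, ← Complex.exp_add]
    congr 1
    have hπ : (Real.pi : ℂ) ≠ 0 := Complex.ofReal_ne_zero.2 Real.pi_ne_zero
    have key : ν₀ * (2 * (Real.pi : ℂ) * Complex.I) = -Complex.log (1 + F (lam₀ : ℂ)) := by
      rw [hν₀def, hν (lam₀ : ℂ)]
      field_simp
    linear_combination key
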